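/- Let A = (a_ij) be an N×N real matrix with nonnegative entries and zero diagonal such that the directed graph G[A] is strongly connected, and let α_1,…,α_N ≥ 0 satisfy d_i^+[A] · α_i < 1/2 for every i, where d_i^+[A] = Σ_j a_ij. Then there exist strictly positive constants p_1,…,p_N and a constant ε > 0, depending only on A and the α_i, such that whenever vectors y_1,…,y_N ∈ ℝ^m and u_1,…,u_N ∈ ℝ^m satisfy u_i = Σ_{j=1}^N a_ij (y_j − y_i) for every i, one has Σ_{i=1}^N p_i (⟨y_i, u_i⟩ + α_i |u_i|²) ≤ −ε · Σ_{i,j=1}^N |y_j − y_i|². -/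

import Mathlib

open RealInnerProductSpace

private lemma inner_sub_self_eq' {E : Type*} [NormedAddCommGroup E] [InnerProductSpace ℝ E]
    (a b : E) : ⟪a, b - a⟫ = (‖b‖ ^ 2 - ‖a‖ ^ 2 - ‖b - a‖ ^ 2) / 2 := by
  have h1 : ‖b - a‖ ^ 2 = ‖b‖ ^ 2 - 2 * ⟪b, a⟫ + ‖a‖ ^ 2 := norm_sub_sq_real b a
  have h2 : ⟪a, b - a⟫ = ⟪a, b⟫ - ⟪a, a⟫ := inner_sub_right a b a
  have h3 : ⟪a, a⟫ = ‖a‖ ^ 2 := real_inner_self_eq_norm_sq a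
  have h4 := real_inner_comm a b
  linarith

/-- Corollary 1: if `G[A]` is strongly connected and `d_i⁺[A] * α_i < 1/2` with
`α_i ≥ 0`, there are positive constants `p i` and `ε > 0` such that whenever
`u i = ∑ j, a_ij • (y j - y i)`,
`∑ i, p i * (⟪y i, u i⟫ + α_i ‖u i‖²) ≤ -ε * ∑ i j, ‖y j - y i‖²`. -/
theorem diffusive_coupling_strict_passivity_bound
    (N m : ℕ) (A : Fin N → Fin N → ℝ)
    (hA_nonneg : ∀ i j, 0 ≤ A i j)
    (hA_diag : ∀ i, A i i = 0)
    (hconn : ∀ i j : Fin N, i ≠ j → Relation.TransGen (fun a b => 0 < A a b) i j)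
    (α : Fin N → ℝ)
    (hα_nonneg : ∀ i, 0 ≤ α i)
    (hα_deg : ∀ i, (∑ j, A i j) * α i < 1 / 2) :
    ∃ (p : Fin N → ℝ) (ε : ℝ), (∀ i, 0 < p i) ∧ 0 < ε ∧
      ∀ y u : Fin N → EuclideanSpace ℝ (Fin m),
        (∀ i, u i = ∑ j, A i j • (y j - y i)) →
        ∑ i, p i * (⟪y i, u i⟫ + α i * ‖u i‖ ^ 2) ≤
          -ε * ∑ i, ∑ j, ‖y j - y i‖ ^ 2 := by
  classical
  rcases Nat.eq_zero_or_pos N with hN0 | hN0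
  · subst hN0
    exact ⟨fun _ => 1, 1, fun i => one_pos, one_pos, fun y u _ => by simp⟩
  have hNE : Nonempty (Fin N) := Fin.pos_iff_nonempty.mp hN0
  -- the out-degrees, kept opaque
  obtain ⟨d, hd⟩ : ∃ f : Fin N → ℝ, ∀ i, f i = ∑ j, A i j :=
    ⟨fun i => ∑ j, A i j, fun _ => rfl⟩
  have hd_nonneg : ∀ i, 0 ≤ d i := fun i => by
    rw [hd]; exact Finset.sum_nonneg fun j _ => hA_nonneg i j
  -- the Laplacian-like matrix
  set L : Matrix (Fin N) (Fin N) ℝ :=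
    Matrix.of (fun i j => A i j - if i = j then (∑ k, A i k) else 0) with hL
  have hdetL : L.det = 0 := by
    rw [← Matrix.exists_mulVec_eq_zero_iff]
    refine ⟨fun _ => 1, ?_, ?_⟩
    · intro h
      have := congrFun h (Classical.arbitrary (Fin N))
      simp at this
    · funext i
      simp only [Matrix.mulVec, dotProduct, hL, Matrix.of_apply, mul_one,
        Pi.zero_apply]
      rw [Finset.sum_sub_distrib]
      simp
  obtain ⟨p0, hp0_ne, hp0⟩ : ∃ v, v ≠ 0 ∧ Matrix.vecMul v L = 0 :=
    Matrix.exists_vecMul_eq_zero_iff.mpr hdetL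
  have hker : ∀ j, ∑ i, A i j * p0 i = d j * p0 j := by
    intro j
    have h := congrFun hp0 j
    simp only [Matrix.vecMul, dotProduct, hL, Matrix.of_apply, Pi.zero_apply,
      mul_sub, mul_ite, mul_zero] at h
    rw [Finset.sum_sub_distrib, Finset.sum_ite_eq' Finset.univ j
      (fun i => p0 i * (∑ k, A i k))] at h
    simp only [Finset.mem_univ, if_true] at h
    have h2 : ∑ i, p0 i * A i j = p0 j * (∑ k, A j k) := by linarith
    calc ∑ i, A i j * p0 i = ∑ i, p0 i * A i j :=
          Finset.sum_congr rfl fun i _ => mul_comm _ _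
      _ = p0 j * (∑ k, A j k) := h2
      _ = d j * p0 j := by rw [hd]; ring
  set q : Fin N → ℝ := fun i => |p0 i| with hq
  have hq_nonneg : ∀ i, 0 ≤ q i := fun i => abs_nonneg _
  have htri : ∀ j, d j * q j ≤ ∑ i, A i j * q i := by
    intro j
    calc d j * q j = |d j * p0 j| := by
          rw [abs_mul, abs_of_nonneg (hd_nonneg j)]
      _ = |∑ i, A i j * p0 i| := by rw [hker j]
      _ ≤ ∑ i, |A i j * p0 i| := Finset.abs_sum_le_sum_abs _ _
      _ = ∑ i, A i j * q i := Finset.sum_congr rfl fun i _ => by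
          rw [abs_mul, abs_of_nonneg (hA_nonneg i j)]
  have htot : ∑ j, (∑ i, A i j * q i - d j * q j) = 0 := by
    rw [Finset.sum_sub_distrib, Finset.sum_comm]
    have h1 : ∀ i : Fin N, ∑ j, A i j * q i = d i * q i := by
      intro i; rw [← Finset.sum_mul, hd]
    rw [Finset.sum_congr rfl fun i _ => h1 i, sub_self]
  have heq : ∀ j, ∑ i, A i j * q i = d j * q j := by
    intro j
    have h0 := (Finset.sum_eq_zero_iff_of_nonneg
      (fun j _ => sub_nonneg.mpr (htri j))).mp htot j (Finset.mem_univ j)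
    linarith [sub_eq_zero.mp h0]
  -- positivity of q
  obtain ⟨i₀, hi₀⟩ := Function.ne_iff.mp hp0_ne
  have hqi₀ : 0 < q i₀ := abs_pos.mpr hi₀
  have hstep : ∀ a b : Fin N, 0 < q a → 0 < A a b → 0 < q b := by
    intro a b hqa hab
    have h1 : A a b * q a ≤ ∑ i, A i b * q i :=
      Finset.single_le_sum (f := fun i => A i b * q i)
        (fun i _ => mul_nonneg (hA_nonneg i b) (hq_nonneg i)) (Finset.mem_univ a)
    rw [heq b] at h1
    have h2 : 0 < d b * q b := lt_of_lt_of_le (mul_pos hab hqa) h1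
    nlinarith [hd_nonneg b, hq_nonneg b]
  have hkey : ∀ j, Relation.TransGen (fun a b => 0 < A a b) i₀ j → 0 < q j := by
    intro j ht
    induction ht with
    | single h => exact hstep _ _ hqi₀ h
    | tail _ h ih => exact hstep _ _ ih h
  have hq_pos : ∀ j, 0 < q j := by
    intro j
    rcases eq_or_ne i₀ j with rfl | hne
    · exact hqi₀
    · exact hkey j (hconn i₀ j hne)
  -- pair bound via paths
  have harc : ∀ a b : Fin N, 0 < A a b →
      ∀ y : Fin N → EuclideanSpace ℝ (Fin m),
      ‖y b - y a‖ ^ 2 ≤ (A a b)⁻¹ * ∑ i, ∑ j, A i j * ‖y j - y i‖ ^ 2 := by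
    intro a b hab y
    have h1 : A a b * ‖y b - y a‖ ^ 2 ≤ ∑ j, A a j * ‖y j - y a‖ ^ 2 :=
      Finset.single_le_sum (f := fun j => A a j * ‖y j - y a‖ ^ 2)
        (fun j _ => mul_nonneg (hA_nonneg a j) (sq_nonneg _)) (Finset.mem_univ b)
    have h2 : (∑ j, A a j * ‖y j - y a‖ ^ 2) ≤ ∑ i, ∑ j, A i j * ‖y j - y i‖ ^ 2 :=
      Finset.single_le_sum (f := fun i => ∑ j, A i j * ‖y j - y i‖ ^ 2)
        (fun i _ => Finset.sum_nonneg fun j _ =>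
          mul_nonneg (hA_nonneg i j) (sq_nonneg _)) (Finset.mem_univ a)
    have h3 := h1.trans h2
    calc ‖y b - y a‖ ^ 2 = (A a b)⁻¹ * (A a b * ‖y b - y a‖ ^ 2) := by
          field_simp
      _ ≤ (A a b)⁻¹ * ∑ i, ∑ j, A i j * ‖y j - y i‖ ^ 2 :=
          mul_le_mul_of_nonneg_left h3 (inv_nonneg.mpr hab.le)
  have hpair : ∀ k l : Fin N, Relation.TransGen (fun a b => 0 < A a b) k l →
      ∃ K : ℝ, 0 ≤ K ∧ ∀ y : Fin N → EuclideanSpace ℝ (Fin m),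
        ‖y l - y k‖ ^ 2 ≤ K * ∑ i, ∑ j, A i j * ‖y j - y i‖ ^ 2 := by
    intro k l ht
    induction ht with
    | single h =>
      exact ⟨(A k _)⁻¹, inv_nonneg.mpr (hA_nonneg _ _), harc _ _ h⟩
    | @tail b c hab hbc ih =>
      obtain ⟨K, hK0, hK⟩ := ih
      refine ⟨2 * K + 2 * (A b c)⁻¹, by positivity, ?_⟩
      intro y
      have h1 : ‖y c - y k‖ ≤ ‖y c - y b‖ + ‖y b - y k‖ := by
        have he : y c - y k = (y c - y b) + (y b - y k) := by abel
        rw [he]; exact norm_add_le _ _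
      have h1' : ‖y c - y k‖ ^ 2 ≤ (‖y c - y b‖ + ‖y b - y k‖) ^ 2 :=
        pow_le_pow_left₀ (norm_nonneg _) h1 2
      have h2 := hK y
      have h3 := harc b c hbc y
      nlinarith [sq_nonneg (‖y c - y b‖ - ‖y b - y k‖)]
  have hKf : ∀ k l : Fin N, ∃ K : ℝ, 0 ≤ K ∧
      ∀ y : Fin N → EuclideanSpace ℝ (Fin m),
        ‖y l - y k‖ ^ 2 ≤ K * ∑ i, ∑ j, A i j * ‖y j - y i‖ ^ 2 := by
    intro k l
    rcases eq_or_ne k l with rfl | hne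
    · exact ⟨0, le_refl 0, fun y => by simp⟩
    · exact hpair k l (hconn k l hne)
  choose Kf hKf0 hKfle using hKf
  obtain ⟨Ktot, hKtot⟩ : ∃ c : ℝ, c = ∑ k, ∑ l, Kf k l := ⟨_, rfl⟩
  have hKtot0 : 0 ≤ Ktot := by
    rw [hKtot]
    exact Finset.sum_nonneg fun k _ => Finset.sum_nonneg fun l _ => hKf0 k l
  -- the minimum coefficient
  obtain ⟨μ, hμdef⟩ : ∃ c : ℝ,
      c = Finset.univ.inf' Finset.univ_nonempty
        (fun i => q i * (1 / 2 - d i * α i)) := ⟨_, rfl⟩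
  have hμ_pos : 0 < μ := by
    rw [hμdef, Finset.lt_inf'_iff]
    intro i _
    have h1 : d i * α i < 1 / 2 := by rw [hd]; exact hα_deg i
    have h2 := hq_pos i
    nlinarith
  have hμ_le : ∀ i, μ ≤ q i * (1 / 2 - d i * α i) := fun i => by
    rw [hμdef]; exact Finset.inf'_le _ (Finset.mem_univ i)
  refine ⟨q, μ / (Ktot + 1), hq_pos, by positivity, ?_⟩
  intro y u hu
  obtain ⟨Ey, hEy⟩ : ∃ c : ℝ, c = ∑ i, ∑ j, A i j * ‖y j - y i‖ ^ 2 := ⟨_, rfl⟩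
  have hEy_nonneg : 0 ≤ Ey := by
    rw [hEy]
    exact Finset.sum_nonneg fun i _ => Finset.sum_nonneg fun j _ =>
      mul_nonneg (hA_nonneg i j) (sq_nonneg _)
  -- bound on ‖u i‖²
  have hu_norm : ∀ i, ‖u i‖ ^ 2 ≤ d i * ∑ j, A i j * ‖y j - y i‖ ^ 2 := by
    intro i
    have h1 : ‖u i‖ ≤ ∑ j, A i j * ‖y j - y i‖ := by
      rw [hu i]
      refine (norm_sum_le _ _).trans (le_of_eq ?_)
      exact Finset.sum_congr rfl fun j _ => by
        rw [norm_smul, Real.norm_eq_abs, abs_of_nonneg (hA_nonneg i j)]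
    have h2 : (∑ j, A i j * ‖y j - y i‖) ^ 2 ≤
        (∑ j, A i j) * ∑ j, A i j * ‖y j - y i‖ ^ 2 := by
      have hcs := Finset.sum_mul_sq_le_sq_mul_sq Finset.univ
        (fun j => Real.sqrt (A i j)) (fun j => Real.sqrt (A i j) * ‖y j - y i‖)
      have e1 : ∀ j : Fin N,
          Real.sqrt (A i j) * (Real.sqrt (A i j) * ‖y j - y i‖)
            = A i j * ‖y j - y i‖ := fun j => by
        rw [← mul_assoc, Real.mul_self_sqrt (hA_nonneg i j)]
      have e2 : ∀ j : Fin N, Real.sqrt (A i j) ^ 2 = A i j := fun j =>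
        Real.sq_sqrt (hA_nonneg i j)
      have e3 : ∀ j : Fin N, (Real.sqrt (A i j) * ‖y j - y i‖) ^ 2
          = A i j * ‖y j - y i‖ ^ 2 := fun j => by
        rw [mul_pow, Real.sq_sqrt (hA_nonneg i j)]
      rw [Finset.sum_congr rfl fun j _ => e1 j,
        Finset.sum_congr rfl fun j _ => e2 j,
        Finset.sum_congr rfl fun j _ => e3 j] at hcs
      exact hcs
    have h1' : ‖u i‖ ^ 2 ≤ (∑ j, A i j * ‖y j - y i‖) ^ 2 :=
      pow_le_pow_left₀ (norm_nonneg _) h1 2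
    calc ‖u i‖ ^ 2 ≤ (∑ j, A i j) * ∑ j, A i j * ‖y j - y i‖ ^ 2 := h1'.trans h2
      _ = d i * ∑ j, A i j * ‖y j - y i‖ ^ 2 := by rw [hd]
  -- inner product identity
  have hinner : ∑ i, q i * ⟪y i, u i⟫
      = -(1 / 2) * ∑ i, ∑ j, q i * (A i j * ‖y j - y i‖ ^ 2) := by
    have hiu : ∀ i, ⟪y i, u i⟫
        = ∑ j, A i j * ((‖y j‖ ^ 2 - ‖y i‖ ^ 2 - ‖y j - y i‖ ^ 2) / 2) := by
      intro i
      rw [hu i, inner_sum]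
      exact Finset.sum_congr rfl fun j _ => by
        rw [real_inner_smul_right, inner_sub_self_eq' (y i) (y j)]
    have step1 : ∑ i, q i * ⟪y i, u i⟫
        = ∑ i, ∑ j, (q i * (A i j * ‖y j‖ ^ 2) - q i * (A i j * ‖y i‖ ^ 2)
            - q i * (A i j * ‖y j - y i‖ ^ 2)) / 2 := by
      refine Finset.sum_congr rfl fun i _ => ?_
      rw [hiu i, Finset.mul_sum]
      exact Finset.sum_congr rfl fun j _ => by ring
    have S1eq : ∑ i, ∑ j, q i * (A i j * ‖y j‖ ^ 2)
        = ∑ j, d j * q j * ‖y j‖ ^ 2 := by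
      rw [Finset.sum_comm]
      refine Finset.sum_congr rfl fun j _ => ?_
      calc ∑ i, q i * (A i j * ‖y j‖ ^ 2) = (∑ i, A i j * q i) * ‖y j‖ ^ 2 := by
            rw [Finset.sum_mul]
            exact Finset.sum_congr rfl fun i _ => by ring
        _ = d j * q j * ‖y j‖ ^ 2 := by rw [heq j]
    have S2eq : ∑ i, ∑ j, q i * (A i j * ‖y i‖ ^ 2)
        = ∑ i, d i * q i * ‖y i‖ ^ 2 := by
      refine Finset.sum_congr rfl fun i _ => ?_
      calc ∑ j, q i * (A i j * ‖y i‖ ^ 2) = (∑ j, A i j) * (q i * ‖y i‖ ^ 2) := by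
            rw [Finset.sum_mul]
            exact Finset.sum_congr rfl fun j _ => by ring
        _ = d i * q i * ‖y i‖ ^ 2 := by rw [hd]; ring
    rw [step1]
    simp only [sub_div, Finset.sum_sub_distrib, ← Finset.sum_div]
    rw [S1eq, S2eq]
    ring
  -- bound the α term
  have hterm2 : ∑ i, q i * (α i * ‖u i‖ ^ 2)
      ≤ ∑ i, ∑ j, q i * α i * d i * (A i j * ‖y j - y i‖ ^ 2) := by
    refine Finset.sum_le_sum fun i _ => ?_
    have h0 := mul_le_mul_of_nonneg_left (hu_norm i)
      (mul_nonneg (hq_nonneg i) (hα_nonneg i))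
    calc q i * (α i * ‖u i‖ ^ 2) = q i * α i * ‖u i‖ ^ 2 := by ring
      _ ≤ q i * α i * (d i * ∑ j, A i j * ‖y j - y i‖ ^ 2) := h0
      _ = q i * α i * d i * ∑ j, A i j * ‖y j - y i‖ ^ 2 := by ring
      _ = ∑ j, q i * α i * d i * (A i j * ‖y j - y i‖ ^ 2) :=
          Finset.mul_sum _ _ _
  -- per-term coefficient bound
  have hcoef : ∑ i, ∑ j, (q i * α i * d i * (A i j * ‖y j - y i‖ ^ 2)
        - 1 / 2 * (q i * (A i j * ‖y j - y i‖ ^ 2)))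
      ≤ ∑ i, ∑ j, -μ * (A i j * ‖y j - y i‖ ^ 2) := by
    refine Finset.sum_le_sum fun i _ => Finset.sum_le_sum fun j _ => ?_
    have ht : (0:ℝ) ≤ A i j * ‖y j - y i‖ ^ 2 :=
      mul_nonneg (hA_nonneg i j) (sq_nonneg _)
    have hm := hμ_le i
    nlinarith [mul_le_mul_of_nonneg_right hm ht]
  -- reshape hcoef
  have hcoef' : (∑ i, ∑ j, q i * α i * d i * (A i j * ‖y j - y i‖ ^ 2))
      - 1 / 2 * (∑ i, ∑ j, q i * (A i j * ‖y j - y i‖ ^ 2)) ≤ -μ * Ey := by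
    have e1 : ∑ i, ∑ j, -μ * (A i j * ‖y j - y i‖ ^ 2) = -μ * Ey := by
      rw [hEy, Finset.mul_sum]
      exact Finset.sum_congr rfl fun i _ => (Finset.mul_sum _ _ _).symm
    have e2 : ∑ i, ∑ j, (q i * α i * d i * (A i j * ‖y j - y i‖ ^ 2)
          - 1 / 2 * (q i * (A i j * ‖y j - y i‖ ^ 2)))
        = (∑ i, ∑ j, q i * α i * d i * (A i j * ‖y j - y i‖ ^ 2))
          - 1 / 2 * (∑ i, ∑ j, q i * (A i j * ‖y j - y i‖ ^ 2)) := by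
      have e3 : ∀ i : Fin N, ∑ j, (q i * α i * d i * (A i j * ‖y j - y i‖ ^ 2)
            - 1 / 2 * (q i * (A i j * ‖y j - y i‖ ^ 2)))
          = (∑ j, q i * α i * d i * (A i j * ‖y j - y i‖ ^ 2))
            - ∑ j, 1 / 2 * (q i * (A i j * ‖y j - y i‖ ^ 2)) := fun i =>
        Finset.sum_sub_distrib _ _
      rw [Finset.sum_congr rfl fun i _ => e3 i, Finset.sum_sub_distrib]
      congr 1
      rw [Finset.mul_sum]
      exact Finset.sum_congr rfl fun i _ => (Finset.mul_sum _ _ _).symm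
    rw [← e1, ← e2]
    exact hcoef
  -- main bound
  have h_main : ∑ i, q i * (⟪y i, u i⟫ + α i * ‖u i‖ ^ 2) ≤ -μ * Ey := by
    have expand : ∑ i, q i * (⟪y i, u i⟫ + α i * ‖u i‖ ^ 2)
        = (∑ i, q i * ⟪y i, u i⟫) + ∑ i, q i * (α i * ‖u i‖ ^ 2) := by
      rw [← Finset.sum_add_distrib]
      exact Finset.sum_congr rfl fun i _ => by ring
    rw [expand, hinner]
    linarith [hterm2, hcoef']
  -- pair sum bound
  have hpairsum : ∑ i, ∑ j, ‖y j - y i‖ ^ 2 ≤ Ktot * Ey := by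
    calc ∑ i, ∑ j, ‖y j - y i‖ ^ 2 ≤ ∑ i, ∑ j, Kf i j * Ey :=
          Finset.sum_le_sum fun i _ => Finset.sum_le_sum fun j _ => by
            rw [hEy]; exact hKfle i j y
      _ = Ktot * Ey := by
          rw [hKtot, Finset.sum_mul]
          exact Finset.sum_congr rfl fun i _ => (Finset.sum_mul _ _ _).symm
  -- conclude
  have hε_pos : 0 < μ / (Ktot + 1) := by positivity
  have hK1 : (0:ℝ) < Ktot + 1 := by linarith
  have hfin : -μ * Ey ≤ -(μ / (Ktot + 1)) * ∑ i, ∑ j, ‖y j - y i‖ ^ 2 := by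
    rw [neg_mul, neg_mul, neg_le_neg_iff]
    calc μ / (Ktot + 1) * (∑ i, ∑ j, ‖y j - y i‖ ^ 2)
        ≤ μ / (Ktot + 1) * (Ktot * Ey) :=
          mul_le_mul_of_nonneg_left hpairsum hε_pos.le
      _ ≤ μ / (Ktot + 1) * ((Ktot + 1) * Ey) := by
          have : Ktot * Ey ≤ (Ktot + 1) * Ey := by nlinarith
          exact mul_le_mul_of_nonneg_left this hε_pos.le
      _ = μ * Ey := by field_simp
  exact h_main.trans hfin
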